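/- Let σ:Σ→Σ be a topological Markov shift and r:Σ→ℝ a bounded Hölder continuous function. If x,y∈Σ and m,n∈ℤ satisfy y_m^∞ = x_n^∞ (i.e., y_{m+k} = x_{n+k} for all k≥0), then the limit lim_{k→∞} [r_{m+k}(y) − r_{n+k}(x)] exists; if moreover x is not pre-periodic, this limit is the same for every pair (m,n) with y_m^∞ = x_n^∞, and defines P^s(x,y). Symmetrically, if y_{−∞}^m = x_{−∞}^n (i.e., y_{m−k} = x_{n−k} for all k≥0), then lim_{k→−∞} [r_{m+k}(y) − r_{n+k}(x)] exists, and if x is not pre-periodic it is independent of the choice of (m,n), defining P^u(x,y). -/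

import Mathlib

open MeasureTheory Filter Set
open scoped Classical

structure MarkovGraph where
  V : Type
  E : V → V → Prop
  countableV : Countable V
  in_edge : ∀ v, ∃ u, E u v
  out_edge : ∀ v, ∃ w, E v w

namespace MarkovGraph

variable (G : MarkovGraph)

/-- The two-sided path space of the graph. -/
def Space : Type := {x : ℤ → G.V // ∀ i, G.E (x i) (x (i + 1))}

/-- The left shift, as a bijection of the path space. -/
def shift : Equiv.Perm G.Space where
  toFun x := ⟨fun i => x.1 (i + 1), fun i => x.2 (i + 1)⟩
  invFun x := ⟨fun i => x.1 (i - 1), fun i => by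
    have h := x.2 (i - 1)
    have e1 : i - 1 + 1 = i + 1 - 1 := by ring
    rwa [e1] at h⟩
  left_inv x := Subtype.ext (funext fun i => by simp)
  right_inv x := Subtype.ext (funext fun i => by simp)

/-- The metric d(x,y) = exp(-min{|n| : x_n ≠ y_n}). -/
noncomputable def dist0 (x y : G.Space) : ℝ :=
  if x = y then 0
  else Real.exp (-(sInf {t : ℝ | ∃ n : ℤ, x.1 n ≠ y.1 n ∧ t = |(n : ℝ)|}))

/-- Hölder continuity with respect to `dist0`. -/
def HolderFun (f : G.Space → ℝ) : Prop :=
  ∃ C : ℝ, 0 < C ∧ ∃ α : ℝ, 0 < α ∧ α ≤ 1 ∧ ∀ x y, |f x - f y| ≤ C * dist0 G x y ^ α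

/-- Birkhoff sums `r_n` for `n : ℤ`. -/
noncomputable def birkhoff (r : G.Space → ℝ) (n : ℤ) (x : G.Space) : ℝ :=
  if 0 ≤ n then ∑ i ∈ Finset.range n.toNat, r ((G.shift ^ (i : ℤ)) x)
  else -∑ i ∈ Finset.range (-n).toNat, r ((G.shift ^ ((i : ℤ) - (-n).toNat)) x)

/-- The suspension space Σ_r = {(x,t) : 0 ≤ t < r(x)}. -/
def Susp (r : G.Space → ℝ) : Type := {p : G.Space × ℝ // 0 ≤ p.2 ∧ p.2 < r p.1}

/-- Defining property of the topological Markov flow with roof `r`. -/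
def IsTMFlow (r : G.Space → ℝ) (Φ : ℝ → G.Susp r → G.Susp r) : Prop :=
  ∀ τ p, ∃ n : ℤ, ((Φ τ p).1.1 = (G.shift ^ n) p.1.1) ∧
    ((Φ τ p).1.2 = p.1.2 + τ - birkhoff G r n p.1.1)

end MarkovGraph

namespace MarkovGraph

variable (G : MarkovGraph)

/-- x is pre-periodic if one of its one-sided tails is periodic. -/
def PrePeriodic (x : G.Space) : Prop :=
  (∃ m : ℤ, ∃ p : ℤ, 0 < p ∧ ∀ i, m ≤ i → x.1 (i + p) = x.1 i) ∨
  (∃ n : ℤ, ∃ p : ℤ, 0 < p ∧ ∀ i, i ≤ n → x.1 (i - p) = x.1 i)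

/-- y ∈ W^{ws}(x): some forward tails of x and y agree. -/
def Wws (x y : G.Space) : Prop := ∃ m n : ℤ, ∀ k : ℕ, y.1 (m + k) = x.1 (n + k)

/-- y ∈ W^{wu}(x): some backward tails of x and y agree. -/
def Wwu (x y : G.Space) : Prop := ∃ m n : ℤ, ∀ k : ℕ, y.1 (m - k) = x.1 (n - k)

end MarkovGraph

namespace MarkovGraph

lemma shift_apply (G : MarkovGraph) (x : G.Space) (i : ℤ) :
    (G.shift x).1 i = x.1 (i + 1) := rfl

lemma shift_pow_apply (G : MarkovGraph) (n : ℕ) (x : G.Space) (i : ℤ) :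
    ((G.shift ^ n) x).1 i = x.1 (i + n) := by
  induction n generalizing i with
  | zero => simp
  | succ n ih =>
    rw [pow_succ', Equiv.Perm.mul_apply, shift_apply, ih]
    push_cast
    ring_nf

lemma shift_zpow_apply (G : MarkovGraph) (t : ℤ) (x : G.Space) (i : ℤ) :
    ((G.shift ^ t) x).1 i = x.1 (i + t) := by
  obtain ⟨n, rfl | rfl⟩ := t.eq_nat_or_neg
  · rw [zpow_natCast, shift_pow_apply]
  · rw [zpow_neg, zpow_natCast]
    have h2 : (G.shift ^ n) ((G.shift ^ n)⁻¹ x) = x := Equiv.apply_symm_apply _ x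
    have := shift_pow_apply G n ((G.shift ^ n)⁻¹ x) (i + -n)
    rw [h2] at this
    rw [this]
    ring_nf

lemma birkhoff_succ (G : MarkovGraph) (r : G.Space → ℝ) (a : ℤ) (x : G.Space) :
    birkhoff G r (a + 1) x = birkhoff G r a x + r ((G.shift ^ a) x) := by
  obtain ⟨n, rfl | rfl⟩ := a.eq_nat_or_neg
  · rw [birkhoff, birkhoff, if_pos (by positivity), if_pos (Int.natCast_nonneg n)]
    have h1 : ((n : ℤ) + 1).toNat = n + 1 := by omega
    have h2 : ((n : ℤ)).toNat = n := by omega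
    rw [h1, h2, Finset.sum_range_succ]
  · rcases Nat.eq_zero_or_pos n with hn | hn
    · subst hn; simp [birkhoff]
    · obtain ⟨k, rfl⟩ := Nat.exists_eq_add_of_lt hn
      rw [zero_add] at *
      have e1 : -((k+1 : ℕ) : ℤ) + 1 = -(k : ℤ) := by push_cast; ring
      rw [e1, birkhoff, birkhoff]
      rcases Nat.eq_zero_or_pos k with hk | hk
      · subst hk
        simp only [Nat.cast_zero, neg_zero, le_refl, if_pos, Int.toNat_zero,
          Finset.range_zero, Finset.sum_empty]
        rw [if_neg (by omega)]
        have h3 : (-(-((0+1 : ℕ) : ℤ))).toNat = 1 := by omega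
        rw [h3]
        simp
      · rw [if_neg (by omega), if_neg (by omega)]
        have h4 : (-(-(k : ℤ))).toNat = k := by omega
        have h5 : (-(-((k+1 : ℕ) : ℤ))).toNat = k + 1 := by omega
        rw [h4, h5, Finset.sum_range_succ']
        push_cast
        simp only [show ∀ j : ℤ, j + 1 - ((k:ℤ) + 1) = j - k from fun j => by ring,
          show (0:ℤ) - ((k:ℤ)+1) = -((k:ℤ)+1) from by ring]
        ring

lemma dist0_nonneg (G : MarkovGraph) (x y : G.Space) : 0 ≤ dist0 G x y := by
  rw [dist0]
  split
  · exact le_refl 0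
  · exact (Real.exp_pos _).le

lemma dist0_le_exp (G : MarkovGraph) (x y : G.Space) (k : ℕ)
    (h : ∀ i : ℤ, |i| ≤ (k : ℤ) → x.1 i = y.1 i) :
    dist0 G x y ≤ Real.exp (-(k : ℝ)) := by
  rw [dist0]
  split
  · exact (Real.exp_pos _).le
  · rename_i hxy
    apply Real.exp_le_exp.2
    apply neg_le_neg
    apply le_csInf
    · have : ∃ n : ℤ, x.1 n ≠ y.1 n := by
        by_contra hne
        push_neg at hne
        exact hxy (Subtype.ext (funext hne))
      obtain ⟨n, hn⟩ := this
      exact ⟨|(n : ℝ)|, n, hn, rfl⟩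
    · rintro t ⟨n, hn, rfl⟩
      have h1 : ¬ |n| ≤ (k : ℤ) := fun hle => hn (h n hle)
      push_neg at h1
      rw [← Int.cast_abs]
      exact_mod_cast h1.le

lemma exists_lim (D : ℕ → ℝ) (C ρ : ℝ) (hρ0 : 0 ≤ ρ) (hρ : ρ < 1)
    (h : ∀ k, |D (k+1) - D k| ≤ C * ρ ^ k) :
    ∃ L, Filter.Tendsto D Filter.atTop (nhds L) := by
  have hsum : Summable (fun k => D (k+1) - D k) := by
    apply Summable.of_norm_bounded ((summable_geometric_of_lt_one hρ0 hρ).mul_left C)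
    intro k
    rw [Real.norm_eq_abs]
    exact h k
  refine ⟨(∑' k, (D (k+1) - D k)) + D 0, ?_⟩
  have ht := hsum.hasSum.tendsto_sum_nat
  have heq : ∀ n, ∑ i ∈ Finset.range n, (D (i+1) - D i) = D n - D 0 :=
    fun n => Finset.sum_range_sub D n
  have := ht.add_const (D 0)
  simp only [heq] at this
  simpa using this

end MarkovGraph

namespace MarkovGraph

lemma holder_bound (G : MarkovGraph) (r : G.Space → ℝ) (C α : ℝ) (hα : 0 < α)
    (hH : ∀ x y, |r x - r y| ≤ C * dist0 G x y ^ α)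
    (u v : G.Space) (k : ℕ) (h : ∀ i : ℤ, |i| ≤ (k : ℤ) → u.1 i = v.1 i)
    (hC : 0 ≤ C) :
    |r u - r v| ≤ C * Real.exp (-α) ^ k := by
  have h2 : dist0 G u v ^ α ≤ Real.exp (-(k:ℝ)) ^ α :=
    Real.rpow_le_rpow (dist0_nonneg G u v) (dist0_le_exp G u v k h) hα.le
  have h3 : Real.exp (-(k:ℝ)) ^ α = Real.exp (-α) ^ k := by
    rw [← Real.exp_mul, ← Real.exp_nat_mul]
    ring_nf
  calc |r u - r v| ≤ C * dist0 G u v ^ α := hH u v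
    _ ≤ C * Real.exp (-(k:ℝ)) ^ α := by gcongr
    _ = C * Real.exp (-α) ^ k := by rw [h3]

lemma tail_eq_int (G : MarkovGraph) (x y : G.Space) (m n : ℤ)
    (h : ∀ k : ℕ, y.1 (m + k) = x.1 (n + k)) (j : ℤ) (hj : 0 ≤ j) :
    y.1 (m + j) = x.1 (n + j) := by
  have := h j.toNat
  rwa [Int.toNat_of_nonneg hj] at this

lemma tail_eq_int' (G : MarkovGraph) (x y : G.Space) (m n : ℤ)
    (h : ∀ k : ℕ, y.1 (m - k) = x.1 (n - k)) (j : ℤ) (hj : 0 ≤ j) :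
    y.1 (m - j) = x.1 (n - j) := by
  have := h j.toNat
  rwa [Int.toNat_of_nonneg hj] at this

lemma stable_exists (G : MarkovGraph) (r : G.Space → ℝ) (hHolder : HolderFun G r)
    (x y : G.Space) (m n : ℤ) (h : ∀ k : ℕ, y.1 (m + k) = x.1 (n + k)) :
    ∃ L : ℝ, Filter.Tendsto
      (fun k : ℕ => birkhoff G r (m + k) y - birkhoff G r (n + k) x)
      Filter.atTop (nhds L) := by
  obtain ⟨C, hC, α, hα, hα1, hH⟩ := hHolder
  apply exists_lim _ C (Real.exp (-α)) (Real.exp_pos _).le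
    (Real.exp_lt_one_iff.2 (by linarith))
  intro k
  have em : m + ((k+1 : ℕ) : ℤ) = (m + (k:ℤ)) + 1 := by push_cast; ring
  have en : n + ((k+1 : ℕ) : ℤ) = (n + (k:ℤ)) + 1 := by push_cast; ring
  rw [em, en, birkhoff_succ, birkhoff_succ]
  have key : birkhoff G r (m + (k:ℤ)) y + r ((G.shift ^ (m + (k:ℤ))) y) -
      (birkhoff G r (n + (k:ℤ)) x + r ((G.shift ^ (n + (k:ℤ))) x)) -
      (birkhoff G r (m + (k:ℤ)) y - birkhoff G r (n + (k:ℤ)) x) =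
      r ((G.shift ^ (m + (k:ℤ))) y) - r ((G.shift ^ (n + (k:ℤ))) x) := by ring
  rw [key]
  apply holder_bound G r C α hα hH _ _ k _ hC.le
  intro i hi
  rw [shift_zpow_apply, shift_zpow_apply]
  have h1 : y.1 (m + (i + (k:ℤ))) = x.1 (n + (i + (k:ℤ))) := by
    apply tail_eq_int G x y m n h
    rw [abs_le] at hi
    omega
  have e1 : i + (m + (k:ℤ)) = m + (i + (k:ℤ)) := by ring
  have e2 : i + (n + (k:ℤ)) = n + (i + (k:ℤ)) := by ring
  rw [e1, e2, h1]

lemma unstable_exists (G : MarkovGraph) (r : G.Space → ℝ) (hHolder : HolderFun G r)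
    (x y : G.Space) (m n : ℤ) (h : ∀ k : ℕ, y.1 (m - k) = x.1 (n - k)) :
    ∃ L : ℝ, Filter.Tendsto
      (fun k : ℕ => birkhoff G r (m - k) y - birkhoff G r (n - k) x)
      Filter.atTop (nhds L) := by
  obtain ⟨C, hC, α, hα, hα1, hH⟩ := hHolder
  apply exists_lim _ C (Real.exp (-α)) (Real.exp_pos _).le
    (Real.exp_lt_one_iff.2 (by linarith))
  intro k
  have em : m - ((k+1 : ℕ) : ℤ) = (m - (k:ℤ) - 1) := by push_cast; ring
  have en : n - ((k+1 : ℕ) : ℤ) = (n - (k:ℤ) - 1) := by push_cast; ring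
  have hm := birkhoff_succ G r (m - (k:ℤ) - 1) y
  have hn := birkhoff_succ G r (n - (k:ℤ) - 1) x
  rw [show m - (k:ℤ) - 1 + 1 = m - (k:ℤ) from by ring] at hm
  rw [show n - (k:ℤ) - 1 + 1 = n - (k:ℤ) from by ring] at hn
  have key : birkhoff G r (m - (k:ℤ) - 1) y - birkhoff G r (n - (k:ℤ) - 1) x -
      (birkhoff G r (m - (k:ℤ)) y - birkhoff G r (n - (k:ℤ)) x) =
      r ((G.shift ^ (n - (k:ℤ) - 1)) x) - r ((G.shift ^ (m - (k:ℤ) - 1)) y) := by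
    rw [hm, hn]; ring
  rw [em, en, key]
  apply holder_bound G r C α hα hH _ _ k _ hC.le
  intro i hi
  rw [shift_zpow_apply, shift_zpow_apply]
  have h1 : y.1 (m - ((k:ℤ) + 1 - i)) = x.1 (n - ((k:ℤ) + 1 - i)) := by
    apply tail_eq_int' G x y m n h
    rw [abs_le] at hi
    omega
  have e1 : i + (n - (k:ℤ) - 1) = n - ((k:ℤ) + 1 - i) := by ring
  have e2 : i + (m - (k:ℤ) - 1) = m - ((k:ℤ) + 1 - i) := by ring
  rw [e1, e2, h1]

end MarkovGraph

namespace MarkovGraph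

lemma stable_match (G : MarkovGraph) (x y : G.Space) (hx : ¬ PrePeriodic G x)
    (m n m' n' : ℤ) (h : ∀ k : ℕ, y.1 (m + k) = x.1 (n + k))
    (h' : ∀ k : ℕ, y.1 (m' + k) = x.1 (n' + k)) :
    n' - m' = n - m := by
  by_contra hp
  obtain ⟨p, hpdef⟩ : ∃ p : ℤ, p = n - m - (n' - m') := ⟨_, rfl⟩
  have hp0 : p ≠ 0 := by omega
  have claim : ∀ i : ℤ, n' + max 0 (m - m') ≤ i → x.1 (i + p) = x.1 i := by
    intro i hi
    set k : ℤ := i - n' with hk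
    have hk0 : 0 ≤ k := by omega
    have hk1 : 0 ≤ m' - m + k := by omega
    have h1 : y.1 (m' + k) = x.1 (n' + k) := tail_eq_int G x y m' n' h' k hk0
    have h2 : y.1 (m + (m' - m + k)) = x.1 (n + (m' - m + k)) :=
      tail_eq_int G x y m n h _ hk1
    have e1 : m + (m' - m + k) = m' + k := by ring
    have e2 : n + (m' - m + k) = i + p := by omega
    have e3 : n' + k = i := by omega
    rw [e1, e2] at h2
    rw [e3] at h1
    rw [← h2, h1]
  apply hx
  left
  rcases lt_or_gt_of_ne hp0 with hneg | hpos
  · refine ⟨n' + max 0 (m - m') + p, -p, by omega, fun i hi => ?_⟩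
    have h3 := claim (i + -p) (by omega)
    rw [show i + -p + p = i from by ring] at h3
    exact h3.symm
  · exact ⟨n' + max 0 (m - m'), p, hpos, claim⟩

lemma unstable_match (G : MarkovGraph) (x y : G.Space) (hx : ¬ PrePeriodic G x)
    (m n m' n' : ℤ) (h : ∀ k : ℕ, y.1 (m - k) = x.1 (n - k))
    (h' : ∀ k : ℕ, y.1 (m' - k) = x.1 (n' - k)) :
    n' - m' = n - m := by
  by_contra hp
  obtain ⟨p, hpdef⟩ : ∃ p : ℤ, p = n - m - (n' - m') := ⟨_, rfl⟩
  have hp0 : p ≠ 0 := by omega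
  have claim : ∀ i : ℤ, i ≤ n' - max 0 (m' - m) → x.1 (i + p) = x.1 i := by
    intro i hi
    set k : ℤ := n' - i with hk
    have hk0 : 0 ≤ k := by omega
    have hk1 : 0 ≤ k + m - m' := by omega
    have h1 : y.1 (m' - k) = x.1 (n' - k) := tail_eq_int' G x y m' n' h' k hk0
    have h2 : y.1 (m - (k + m - m')) = x.1 (n - (k + m - m')) :=
      tail_eq_int' G x y m n h _ hk1
    have e1 : m - (k + m - m') = m' - k := by ring
    have e2 : n - (k + m - m') = i + p := by omega
    have e3 : n' - k = i := by omega
    rw [e1, e2] at h2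
    rw [e3] at h1
    rw [← h2, h1]
  apply hx
  right
  rcases lt_or_gt_of_ne hp0 with hneg | hpos
  · refine ⟨n' - max 0 (m' - m), -p, by omega, fun i hi => ?_⟩
    have h3 := claim i hi
    rw [show i - -p = i + p from by ring]
    exact h3
  · refine ⟨n' - max 0 (m' - m) + p, p, hpos, fun i hi => ?_⟩
    have h3 := claim (i - p) (by omega)
    rw [show i - p + p = i from by ring] at h3
    exact h3.symm

lemma stable_unique (G : MarkovGraph) (r : G.Space → ℝ)
    (x y : G.Space) (hx : ¬ PrePeriodic G x)
    (m n m' n' : ℤ) (h : ∀ k : ℕ, y.1 (m + k) = x.1 (n + k))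
    (h' : ∀ k : ℕ, y.1 (m' + k) = x.1 (n' + k))
    (L L' : ℝ)
    (hL : Filter.Tendsto (fun k : ℕ => birkhoff G r (m + k) y - birkhoff G r (n + k) x)
      Filter.atTop (nhds L))
    (hL' : Filter.Tendsto (fun k : ℕ => birkhoff G r (m' + k) y - birkhoff G r (n' + k) x)
      Filter.atTop (nhds L')) : L = L' := by
  have hd : n' - m' = n - m := stable_match G x y hx m n m' n' h h'
  set d : ℤ := m' - m with hddef
  rcases le_or_gt 0 d with hd0 | hd0
  · set e : ℕ := d.toNat with hedef
    have he : (e : ℤ) = d := Int.toNat_of_nonneg hd0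
    have heq : (fun k : ℕ => birkhoff G r (m' + k) y - birkhoff G r (n' + k) x) =
        (fun k : ℕ => birkhoff G r (m + (k + e : ℕ)) y - birkhoff G r (n + (k + e : ℕ)) x) := by
      funext k
      have e1 : m + ((k + e : ℕ) : ℤ) = m' + (k : ℤ) := by push_cast; omega
      have e2 : n + ((k + e : ℕ) : ℤ) = n' + (k : ℤ) := by push_cast; omega
      rw [e1, e2]
    rw [heq] at hL'
    exact tendsto_nhds_unique (hL.comp (tendsto_add_atTop_nat e)) hL'
  · set e : ℕ := (-d).toNat with hedef
    have he : (e : ℤ) = -d := Int.toNat_of_nonneg (by omega)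
    have heq : (fun k : ℕ => birkhoff G r (m + k) y - birkhoff G r (n + k) x) =
        (fun k : ℕ => birkhoff G r (m' + (k + e : ℕ)) y - birkhoff G r (n' + (k + e : ℕ)) x) := by
      funext k
      have e1 : m' + ((k + e : ℕ) : ℤ) = m + (k : ℤ) := by push_cast; omega
      have e2 : n' + ((k + e : ℕ) : ℤ) = n + (k : ℤ) := by push_cast; omega
      rw [e1, e2]
    rw [heq] at hL
    exact tendsto_nhds_unique hL (hL'.comp (tendsto_add_atTop_nat e))

lemma unstable_unique (G : MarkovGraph) (r : G.Space → ℝ)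
    (x y : G.Space) (hx : ¬ PrePeriodic G x)
    (m n m' n' : ℤ) (h : ∀ k : ℕ, y.1 (m - k) = x.1 (n - k))
    (h' : ∀ k : ℕ, y.1 (m' - k) = x.1 (n' - k))
    (L L' : ℝ)
    (hL : Filter.Tendsto (fun k : ℕ => birkhoff G r (m - k) y - birkhoff G r (n - k) x)
      Filter.atTop (nhds L))
    (hL' : Filter.Tendsto (fun k : ℕ => birkhoff G r (m' - k) y - birkhoff G r (n' - k) x)
      Filter.atTop (nhds L')) : L = L' := by
  have hd : n' - m' = n - m := unstable_match G x y hx m n m' n' h h'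
  set d : ℤ := m' - m with hddef
  rcases le_or_gt 0 d with hd0 | hd0
  · set e : ℕ := d.toNat with hedef
    have he : (e : ℤ) = d := Int.toNat_of_nonneg hd0
    have heq : (fun k : ℕ => birkhoff G r (m - k) y - birkhoff G r (n - k) x) =
        (fun k : ℕ => birkhoff G r (m' - (k + e : ℕ)) y - birkhoff G r (n' - (k + e : ℕ)) x) := by
      funext k
      have e1 : m' - ((k + e : ℕ) : ℤ) = m - (k : ℤ) := by push_cast; omega
      have e2 : n' - ((k + e : ℕ) : ℤ) = n - (k : ℤ) := by push_cast; omega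
      rw [e1, e2]
    rw [heq] at hL
    exact tendsto_nhds_unique hL (hL'.comp (tendsto_add_atTop_nat e))
  · set e : ℕ := (-d).toNat with hedef
    have he : (e : ℤ) = -d := Int.toNat_of_nonneg (by omega)
    have heq : (fun k : ℕ => birkhoff G r (m' - k) y - birkhoff G r (n' - k) x) =
        (fun k : ℕ => birkhoff G r (m - (k + e : ℕ)) y - birkhoff G r (n - (k + e : ℕ)) x) := by
      funext k
      have e1 : m - ((k + e : ℕ) : ℤ) = m' - (k : ℤ) := by push_cast; omega
      have e2 : n - ((k + e : ℕ) : ℤ) = n' - (k : ℤ) := by push_cast; omega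
      rw [e1, e2]
    rw [heq] at hL'
    exact tendsto_nhds_unique (hL.comp (tendsto_add_atTop_nat e)) hL'

end MarkovGraph


open MarkovGraph in
/-- Existence of the Bowen–Marcus limits, and their independence of the
choice of matching pair `(m,n)` when `x` is not pre-periodic. -/
theorem statement4 (G : MarkovGraph) (r : G.Space → ℝ)
    (hbdd : ∃ M : ℝ, ∀ x, |r x| ≤ M) (hHolder : HolderFun G r) :
    (∀ x y : G.Space, ∀ m n : ℤ, (∀ k : ℕ, y.1 (m + k) = x.1 (n + k)) →
      ∃ L : ℝ, Filter.Tendsto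
        (fun k : ℕ => birkhoff G r (m + k) y - birkhoff G r (n + k) x)
        Filter.atTop (nhds L)) ∧
    (∀ x y : G.Space, ¬ PrePeriodic G x →
      ∀ m n m' n' : ℤ, (∀ k : ℕ, y.1 (m + k) = x.1 (n + k)) →
        (∀ k : ℕ, y.1 (m' + k) = x.1 (n' + k)) →
      ∀ L L' : ℝ,
        Filter.Tendsto (fun k : ℕ => birkhoff G r (m + k) y - birkhoff G r (n + k) x)
          Filter.atTop (nhds L) →
        Filter.Tendsto (fun k : ℕ => birkhoff G r (m' + k) y - birkhoff G r (n' + k) x)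
          Filter.atTop (nhds L') → L = L') ∧
    (∀ x y : G.Space, ∀ m n : ℤ, (∀ k : ℕ, y.1 (m - k) = x.1 (n - k)) →
      ∃ L : ℝ, Filter.Tendsto
        (fun k : ℕ => birkhoff G r (m - k) y - birkhoff G r (n - k) x)
        Filter.atTop (nhds L)) ∧
    (∀ x y : G.Space, ¬ PrePeriodic G x →
      ∀ m n m' n' : ℤ, (∀ k : ℕ, y.1 (m - k) = x.1 (n - k)) →
        (∀ k : ℕ, y.1 (m' - k) = x.1 (n' - k)) →
      ∀ L L' : ℝ,
        Filter.Tendsto (fun k : ℕ => birkhoff G r (m - k) y - birkhoff G r (n - k) x)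
          Filter.atTop (nhds L) →
        Filter.Tendsto (fun k : ℕ => birkhoff G r (m' - k) y - birkhoff G r (n' - k) x)
          Filter.atTop (nhds L') → L = L') := by
  exact ⟨fun x y m n h => stable_exists G r hHolder x y m n h,
    fun x y hx m n m' n' h h' L L' hL hL' =>
      stable_unique G r x y hx m n m' n' h h' L L' hL hL',
    fun x y m n h => unstable_exists G r hHolder x y m n h,
    fun x y hx m n m' n' h h' L L' hL hL' =>
      unstable_unique G r x y hx m n m' n' h h' L L' hL hL'⟩
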